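/- arXiv:1706.07899 — 2 statements merged into one kernel-verified Lean document; each statement's English description precedes it below -/
import Mathlib

section
/- Let Σ̂ and Σ be symmetric p×p real matrices and s ≥ 1. Suppose the restricted eigenvalue condition holds for Σ: κ := min over J ⊆ {1,…,p} with |J| ≤ s of the min over u ≠ 0 with |u_{J^c}|₁ ≤ 3|u_J|₁ of u'Σu/|u|₂² > 0. If the entrywise bound max_{1≤j,k≤p} |Σ̂_{jk} − Σ_{jk}| ≤ κ/(300·s) holds, then for every J ⊆ {1,…,p} with |J| ≤ s and every u ∈ ℝ^p with |u_{J^c}|₁ ≤ 3|u_J|₁, one has u'Σ̂u ≥ (κ/2)|u|₂². -/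
open MeasureTheory ProbabilityTheory Matrix

namespace Paper

variable {Ω E : Type*} [MeasurableSpace Ω] [MeasurableSpace E]

/-- The family of innovations: `some i` is `ε i` for `i : ℤ`, and `none` is the
independent copy `ε₀'` used in the coupled process. All are i.i.d. -/
structure Innov (μ : Measure Ω) (E : Type*) [MeasurableSpace E] : Type _ where
  ε : Option ℤ → Ω → E
  meas : ∀ i, Measurable (ε i)
  indep : iIndepFun ε μ
  ident : ∀ i j, μ.map (ε i) = μ.map (ε j)

/-- history `F_i = (…, ε_{i-1}, ε_i)`, recorded as `k ↦ ε_{i-k}`. -/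
def hist {μ : Measure Ω} (I : Innov μ E) (i : ℤ) (ω : Ω) : ℕ → E :=
  fun k => I.ε (some (i - k)) ω

/-- coupled history `F_i*`, with `ε₀` replaced by the independent copy `ε₀'`. -/
def histStar {μ : Measure Ω} (I : Innov μ E) (i : ℤ) (ω : Ω) : ℕ → E :=
  fun k => if i = (k : ℤ) then I.ε none ω else I.ε (some (i - k)) ω

/-- `‖f‖_q = (E |f|^q)^{1/q}` -/
noncomputable def lqNorm (μ : Measure Ω) (q : ℝ) (f : Ω → ℝ) : ℝ :=
  (∫ ω, |f ω| ^ q ∂μ) ^ (1 / q)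

/-- functional dependence measure `δ_{i,q}` of the process `i ↦ g (F_i)` -/
noncomputable def fdm (μ : Measure Ω) (I : Innov μ E) (g : (ℕ → E) → ℝ) (q : ℝ) (i : ℕ) : ℝ :=
  lqNorm μ q (fun ω => g (hist I i ω) - g (histStar I i ω))

/-- tail sum `Δ_{m,q}` -/
noncomputable def tailSum (μ : Measure Ω) (I : Innov μ E) (g : (ℕ → E) → ℝ) (q : ℝ) (m : ℕ) : ℝ :=
  ∑' i : ℕ, fdm μ I g q (m + i)

/-- dependence adjusted norm `‖·‖_{q,α}` -/
noncomputable def dan (μ : Measure Ω) (I : Innov μ E) (g : (ℕ → E) → ℝ) (q α : ℝ) : ℝ :=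
  ⨆ m : ℕ, ((m : ℝ) + 1) ^ α * tailSum μ I g q m

/-- `ω_{i,q}`, the `ℒ^∞` functional dependence measure of a vector process -/
noncomputable def fdmMax (μ : Measure Ω) (I : Innov μ E) {ι : Type*} [Fintype ι]
    (g : ι → (ℕ → E) → ℝ) (q : ℝ) (i : ℕ) : ℝ :=
  lqNorm μ q (fun ω => ⨆ j, |g j (hist I i ω) - g j (histStar I i ω)|)

/-- `ℒ^∞` dependence adjusted norm `‖ |x.|_∞ ‖_{q,α}` of a vector process -/
noncomputable def danMax (μ : Measure Ω) (I : Innov μ E) {ι : Type*} [Fintype ι]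
    (g : ι → (ℕ → E) → ℝ) (q α : ℝ) : ℝ :=
  ⨆ m : ℕ, ((m : ℝ) + 1) ^ α * ∑' i : ℕ, fdmMax μ I g q (m + i)

noncomputable def l1 {ι : Type*} [Fintype ι] (v : ι → ℝ) : ℝ := ∑ j, |v j|
noncomputable def l2sq {ι : Type*} [Fintype ι] (v : ι → ℝ) : ℝ := ∑ j, v j ^ 2
noncomputable def l2 {ι : Type*} [Fintype ι] (v : ι → ℝ) : ℝ := Real.sqrt (l2sq v)
noncomputable def linf {ι : Type*} [Fintype ι] (v : ι → ℝ) : ℝ := ⨆ j, |v j|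

/-- restriction of a vector to a coordinate set (zero outside `J`) -/
noncomputable def restr {ι : Type*} [Fintype ι] [DecidableEq ι] (J : Finset ι) (v : ι → ℝ) : ι → ℝ :=
  fun j => if j ∈ J then v j else 0

/-- `b` minimizes `n⁻¹ |Y - Xb|₂² + λ |b|₁` -/
def IsLassoSol {n p : ℕ} (X : Matrix (Fin n) (Fin p) ℝ) (Y : Fin n → ℝ) (lam : ℝ)
    (b : Fin p → ℝ) : Prop :=
  ∀ b' : Fin p → ℝ,
    (n : ℝ)⁻¹ * l2sq (Y - X.mulVec b) + lam * l1 b ≤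
      (n : ℝ)⁻¹ * l2sq (Y - X.mulVec b') + lam * l1 b'


/-- the sample restricted eigenvalue bound holds once the sample
covariance matrix is entrywise close to a population matrix satisfying RE(s,3). -/
theorem sample_restricted_eigenvalue {p : ℕ}
    (Sighat Sig : Matrix (Fin p) (Fin p) ℝ) (hSighat : Sighat.IsSymm) (hSig : Sig.IsSymm)
    (s : ℕ) (hs : 1 ≤ s) (κ : ℝ) (hκpos : 0 < κ)
    (hRE : ∀ J : Finset (Fin p), J.card ≤ s → ∀ u : Fin p → ℝ, u ≠ 0 →
      l1 (restr Jᶜ u) ≤ 3 * l1 (restr J u) → κ * l2sq u ≤ u ⬝ᵥ Sig.mulVec u)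
    (hentry : ∀ j k, |Sighat j k - Sig j k| ≤ κ / (300 * s)) :
    ∀ J : Finset (Fin p), J.card ≤ s → ∀ u : Fin p → ℝ,
      l1 (restr Jᶜ u) ≤ 3 * l1 (restr J u) → (κ / 2) * l2sq u ≤ u ⬝ᵥ Sighat.mulVec u := by
  intro J hJ u hcone
  by_cases hu : u = 0
  · subst hu
    simp [l2sq, dotProduct, Matrix.mulVec]
  have hre := hRE J hJ u hu hcone
  have hspos : (0:ℝ) < s := by exact_mod_cast Nat.lt_of_lt_of_le Nat.zero_lt_one hs
  set c : ℝ := κ / (300 * s) with hc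
  have hcpos : 0 < c := by positivity
  -- the entrywise difference bound
  have hdiff : |u ⬝ᵥ Sighat.mulVec u - u ⬝ᵥ Sig.mulVec u| ≤ c * (l1 u) ^ 2 := by
    have hexp : u ⬝ᵥ Sighat.mulVec u - u ⬝ᵥ Sig.mulVec u
        = ∑ j, ∑ k, u j * ((Sighat j k - Sig j k) * u k) := by
      simp [dotProduct, Matrix.mulVec, Finset.mul_sum, ← Finset.sum_sub_distrib]
      exact Finset.sum_congr rfl fun j _ => Finset.sum_congr rfl fun k _ => by ring
    rw [hexp]
    calc |∑ j, ∑ k, u j * ((Sighat j k - Sig j k) * u k)|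
        ≤ ∑ j, |∑ k, u j * ((Sighat j k - Sig j k) * u k)| := Finset.abs_sum_le_sum_abs _ _
      _ ≤ ∑ j, ∑ k, |u j * ((Sighat j k - Sig j k) * u k)| := by
          exact Finset.sum_le_sum fun j _ => Finset.abs_sum_le_sum_abs _ _
      _ ≤ ∑ j, ∑ k, |u j| * (c * |u k|) := by
          refine Finset.sum_le_sum fun j _ => Finset.sum_le_sum fun k _ => ?_
          rw [abs_mul, abs_mul]
          exact mul_le_mul_of_nonneg_left
            (mul_le_mul_of_nonneg_right (hentry j k) (abs_nonneg _)) (abs_nonneg _)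
      _ = c * (l1 u) ^ 2 := by
          simp only [l1, ← Finset.mul_sum, ← Finset.sum_mul]
          ring
  -- l1 bound via cone and Cauchy-Schwarz
  have hl1split : l1 u = l1 (restr J u) + l1 (restr Jᶜ u) := by
    simp only [l1, restr]
    rw [← Finset.sum_add_distrib]
    refine Finset.sum_congr rfl fun j _ => ?_
    by_cases hj : j ∈ J <;> simp [hj]
  have hl1J_nonneg : 0 ≤ l1 (restr J u) :=
    Finset.sum_nonneg fun j _ => abs_nonneg _
  have hl1u : l1 u ≤ 4 * l1 (restr J u) := by
    rw [hl1split]; linarith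
  have hCS : (l1 (restr J u)) ^ 2 ≤ (s : ℝ) * l2sq u := by
    have h1 : l1 (restr J u) = ∑ j ∈ J, |u j| := by
      rw [l1, ← Finset.sum_subset (Finset.subset_univ J)]
      · exact Finset.sum_congr rfl fun j hj => by simp [restr, hj]
      · intro j _ hj; simp [restr, hj]
    have h2 : (∑ j ∈ J, |u j|) ^ 2 ≤ (J.card : ℝ) * ∑ j ∈ J, |u j| ^ 2 :=
      sq_sum_le_card_mul_sum_sq
    have h3 : ∑ j ∈ J, |u j| ^ 2 ≤ l2sq u := by
      rw [l2sq]
      refine Finset.sum_le_sum_of_subset_of_nonneg (Finset.subset_univ J)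
        (fun j _ _ => by positivity) |>.trans_eq' ?_
      exact Finset.sum_congr rfl fun j _ => by rw [sq_abs]
    have h4 : (J.card : ℝ) ≤ s := by exact_mod_cast hJ
    calc (l1 (restr J u)) ^ 2 = (∑ j ∈ J, |u j|) ^ 2 := by rw [h1]
      _ ≤ (J.card : ℝ) * ∑ j ∈ J, |u j| ^ 2 := h2
      _ ≤ (s : ℝ) * l2sq u := by
          have hnn : 0 ≤ ∑ j ∈ J, |u j| ^ 2 := Finset.sum_nonneg fun j _ => by positivity
          have hl2 : 0 ≤ l2sq u := Finset.sum_nonneg fun j _ => by positivity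
          nlinarith
  have hl2nn : 0 ≤ l2sq u := Finset.sum_nonneg fun j _ => by positivity
  have hl1nn : 0 ≤ l1 u := Finset.sum_nonneg fun j _ => abs_nonneg _
  have hl1sq : (l1 u) ^ 2 ≤ 16 * ((s : ℝ) * l2sq u) := by nlinarith
  have hfinal : c * (l1 u) ^ 2 ≤ (16 / 300) * κ * l2sq u := by
    rw [hc]
    rw [div_mul_eq_mul_div, div_le_iff₀ (by positivity)]
    nlinarith
  have habs := abs_le.mp hdiff
  nlinarith [habs.1]

end Paper
end

section
/- Let Y = Xβ + e with X a real n×p matrix, β ∈ ℝ^p such that β_j ≠ 0 for 1 ≤ j ≤ s and β_j = 0 for s < j ≤ p, and e ∈ ℝ^n. Write X = (X_{(1)}, X_{(2)}) with X_{(1)} the first s columns, assume Σ̂₁₁ = X_{(1)}'X_{(1)}/n is invertible, set Σ̂₂₁ = X_{(2)}'X_{(1)}/n, W_n = X'e/√n with W_n(1) and W_n(2) its first s and last p−s entries, and let β̂ be a minimizer over b ∈ ℝ^p of |Y − Xb|₂² + λ|b|₁ with λ ≥ 0. Define the events B_n = { for all 1 ≤ j ≤ s: |[Σ̂₁₁^{−1}W_n(1)]_j|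 < √n·|β_j| − (λ/(2√n))·|[Σ̂₁₁^{−1} sign(β_{(1)})]_j| } and D_n = { for all s < k ≤ p: |[Σ̂₂₁Σ̂₁₁^{−1}W_n(1) − W_n(2)]_{k}| ≤ (λ/(2√n))·(1 − |[Σ̂₂₁Σ̂₁₁^{−1} sign(β_{(1)})]_{k}|) }. Then on the event B_n ∩ D_n there is a Lasso solution β̂ with sign(β̂_j) = sign(β_j) for all j; consequently P(β̂ =_s β) ≥ P(B_n ∩ D_n). -/
open MeasureTheory ProbabilityTheory Matrix

namespace Paper

variable {Ω E : Type*} [MeasurableSpace Ω] [MeasurableSpace E]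

/-- `b` minimizes `|Y - Xb|₂² + λ|b|₁` (no `n⁻¹` normalization), with the
covariates split into the `s` relevant ones and the `t` irrelevant ones. -/
def IsLassoSolS {n s t : ℕ} (X : Matrix (Fin n) (Fin s ⊕ Fin t) ℝ) (Y : Fin n → ℝ)
    (lam : ℝ) (b : Fin s ⊕ Fin t → ℝ) : Prop :=
  ∀ b' : Fin s ⊕ Fin t → ℝ,
    l2sq (Y - X.mulVec b) + lam * l1 b ≤ l2sq (Y - X.mulVec b') + lam * l1 b'


lemma abs_sign_one {x : ℝ} (hx : x ≠ 0) : |Real.sign x| = 1 := by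
  rcases hx.lt_or_gt with h | h
  · rw [Real.sign_of_neg h]; norm_num
  · rw [Real.sign_of_pos h]; norm_num

lemma kkt_sufficient {n s t : ℕ} (X : Matrix (Fin n) (Fin s ⊕ Fin t) ℝ) (Y : Fin n → ℝ)
    (lam : ℝ) (b : Fin s ⊕ Fin t → ℝ)
    (hc1 : ∀ j, |Xᵀ.mulVec (Y - X.mulVec b) j| ≤ lam / 2)
    (hc2 : ∀ j, Xᵀ.mulVec (Y - X.mulVec b) j * b j = lam / 2 * |b j|) :
    IsLassoSolS X Y lam b := by
  intro b'
  set v : Fin n → ℝ := Y - X.mulVec b with hv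
  set c : Fin s ⊕ Fin t → ℝ := Xᵀ.mulVec v with hc
  have hswap : ∀ d : Fin s ⊕ Fin t → ℝ,
      ∑ i, v i * (X.mulVec d) i = ∑ j, c j * d j := by
    intro d
    simp only [hc, mulVec, dotProduct, transpose_apply, Finset.mul_sum, Finset.sum_mul]
    rw [Finset.sum_comm]
    exact Finset.sum_congr rfl fun j _ => Finset.sum_congr rfl fun i _ => by ring
  have hYb' : Y - X.mulVec b' = v + X.mulVec (b - b') := by
    rw [hv, Matrix.mulVec_sub]; abel
  have hexp : l2sq (Y - X.mulVec b') =
      l2sq v + 2 * (∑ j, c j * (b j - b' j)) + l2sq (X.mulVec (b - b')) := by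
    rw [hYb']
    have h := hswap (b - b')
    simp only [Pi.sub_apply] at h
    simp only [l2sq, Pi.add_apply, add_sq]
    rw [Finset.sum_add_distrib, Finset.sum_add_distrib, ← h, Finset.mul_sum]
    congr 2
    exact Finset.sum_congr rfl fun i _ => by ring
  rw [hexp]
  have h1 : 0 ≤ l2sq (X.mulVec (b - b')) := Finset.sum_nonneg fun i _ => sq_nonneg _
  have h2 : lam * l1 b ≤ 2 * (∑ j, c j * (b j - b' j)) + lam * l1 b' := by
    simp only [l1, Finset.mul_sum, mul_sub]
    have key : ∀ j : Fin s ⊕ Fin t,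
        lam * |b j| - lam * |b' j| ≤ 2 * (c j * b j) - 2 * (c j * b' j) := by
      intro j
      have h3 : c j * b' j ≤ lam / 2 * |b' j| := by
        calc c j * b' j ≤ |c j * b' j| := le_abs_self _
        _ = |c j| * |b' j| := abs_mul _ _
        _ ≤ lam / 2 * |b' j| := mul_le_mul_of_nonneg_right (hc1 j) (abs_nonneg _)
      have h4 := hc2 j
      linarith
    have := Finset.sum_le_sum fun j (_ : j ∈ (Finset.univ : Finset (Fin s ⊕ Fin t))) => key j
    simp only [Finset.sum_sub_distrib] at this ⊢
    linarith
  linarith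

/-- sign recovery of the Lasso on the event `B_n ∩ D_n`
(Proposition 1 of Zhao and Yu (2006), random-design version). -/
theorem lasso_sign_recovery_event {Ω : Type*} [MeasurableSpace Ω]
    (μ : Measure Ω) [IsProbabilityMeasure μ]
    {n s t : ℕ} (hn : 0 < n)
    (X : Ω → Matrix (Fin n) (Fin s ⊕ Fin t) ℝ) (e : Ω → Fin n → ℝ)
    (β : Fin s ⊕ Fin t → ℝ) (hβ1 : ∀ j, β (Sum.inl j) ≠ 0) (hβ2 : ∀ k, β (Sum.inr k) = 0)
    (Y : Ω → Fin n → ℝ) (hY : ∀ ω, Y ω = (X ω).mulVec β + e ω)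
    (lam : ℝ) (hlam : 0 ≤ lam)
    (S11 : Ω → Matrix (Fin s) (Fin s) ℝ)
    (hS11 : ∀ ω, S11 ω =
      (n : ℝ)⁻¹ • (((X ω).submatrix id Sum.inl)ᵀ * (X ω).submatrix id Sum.inl))
    (hinv : ∀ ω, IsUnit (S11 ω).det)
    (S21 : Ω → Matrix (Fin t) (Fin s) ℝ)
    (hS21 : ∀ ω, S21 ω =
      (n : ℝ)⁻¹ • (((X ω).submatrix id Sum.inr)ᵀ * (X ω).submatrix id Sum.inl))
    (W : Ω → (Fin s ⊕ Fin t) → ℝ)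
    (hW : ∀ ω, W ω = (Real.sqrt n)⁻¹ • (X ω)ᵀ.mulVec (e ω))
    (sgn1 : Fin s → ℝ) (hsgn1 : ∀ j, sgn1 j = Real.sign (β (Sum.inl j)))
    (Bn Dn : Set Ω)
    (hBn : Bn = {ω | ∀ j : Fin s,
      |((S11 ω)⁻¹.mulVec fun j' => W ω (Sum.inl j')) j| <
        Real.sqrt n * |β (Sum.inl j)| -
          lam / (2 * Real.sqrt n) * |((S11 ω)⁻¹.mulVec sgn1) j|})
    (hDn : Dn = {ω | ∀ k : Fin t,
      |((S21 ω * (S11 ω)⁻¹).mulVec (fun j' => W ω (Sum.inl j')) -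
          fun k' => W ω (Sum.inr k')) k| ≤
        lam / (2 * Real.sqrt n) * (1 - |((S21 ω * (S11 ω)⁻¹).mulVec sgn1) k|)}) :
    (∀ ω ∈ Bn ∩ Dn, ∃ b : Fin s ⊕ Fin t → ℝ,
        IsLassoSolS (X ω) (Y ω) lam b ∧ ∀ j, Real.sign (b j) = Real.sign (β j)) ∧
      μ (Bn ∩ Dn) ≤
        μ {ω | ∃ b : Fin s ⊕ Fin t → ℝ,
          IsLassoSolS (X ω) (Y ω) lam b ∧ ∀ j, Real.sign (b j) = Real.sign (β j)} := by
  have hn' : (0:ℝ) < n := by exact_mod_cast hn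
  set rn := Real.sqrt n with hrndef
  have hrn : 0 < rn := Real.sqrt_pos.mpr hn'
  have hrn2 : rn * rn = n := Real.mul_self_sqrt hn'.le
  have key : ∀ ω ∈ Bn ∩ Dn, ∃ b : Fin s ⊕ Fin t → ℝ,
      IsLassoSolS (X ω) (Y ω) lam b ∧ ∀ j, Real.sign (b j) = Real.sign (β j) := by
    rintro ω ⟨hB, hD⟩
    rw [hBn] at hB
    rw [hDn] at hD
    simp only [Set.mem_setOf_eq] at hB hD
    set A := X ω with hA
    set Sg := S11 ω with hSg
    set Si := Sg⁻¹ with hSi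
    set W1 : Fin s → ℝ := fun j' => W ω (Sum.inl j') with hW1
    set W2 : Fin t → ℝ := fun k' => W ω (Sum.inr k') with hW2
    set M := S21 ω * Si with hM
    set w0 : Fin s → ℝ := W1 - (lam/(2*rn)) • sgn1 with hw0
    set d1 : Fin s → ℝ := rn⁻¹ • Si.mulVec w0 with hd1
    set b : Fin s ⊕ Fin t → ℝ := Sum.elim (fun j => β (Sum.inl j) + d1 j) 0 with hb
    have hlamrn : 0 ≤ lam / (2 * rn) := by positivity
    -- bound on the perturbation
    have hmw : Si.mulVec w0 = Si.mulVec W1 - (lam/(2*rn)) • Si.mulVec sgn1 := by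
      rw [hw0, Matrix.mulVec_sub, Matrix.mulVec_smul]
    have hd1abs : ∀ j, |d1 j| < |β (Sum.inl j)| := by
      intro j
      have hBj := hB j
      have e2 : (Si.mulVec w0) j = Si.mulVec W1 j - lam/(2*rn) * (Si.mulVec sgn1) j := by
        rw [hmw]; simp [Pi.sub_apply, Pi.smul_apply, smul_eq_mul]
      have e3 : |(Si.mulVec w0) j| ≤ |Si.mulVec W1 j| + lam/(2*rn) * |Si.mulVec sgn1 j| := by
        rw [e2]
        calc |Si.mulVec W1 j - lam/(2*rn) * (Si.mulVec sgn1) j|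
            ≤ |Si.mulVec W1 j| + |lam/(2*rn) * (Si.mulVec sgn1) j| := abs_sub _ _
        _ = |Si.mulVec W1 j| + lam/(2*rn) * |Si.mulVec sgn1 j| := by
            rw [abs_mul, abs_of_nonneg hlamrn]
      have hlt : |(Si.mulVec w0) j| < rn * |β (Sum.inl j)| := by
        refine lt_of_le_of_lt e3 ?_
        linarith
      have : |d1 j| = rn⁻¹ * |(Si.mulVec w0) j| := by
        simp only [hd1, Pi.smul_apply, smul_eq_mul, abs_mul,
          abs_of_nonneg (inv_nonneg.mpr hrn.le)]
      rw [this]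
      calc rn⁻¹ * |(Si.mulVec w0) j| < rn⁻¹ * (rn * |β (Sum.inl j)|) := by
            exact mul_lt_mul_of_pos_left hlt (inv_pos.mpr hrn)
      _ = |β (Sum.inl j)| := by
            rw [← mul_assoc, inv_mul_cancel₀ hrn.ne', one_mul]
    -- residual identity
    have hβb : β - b = -(Sum.elim d1 0) := by
      funext x
      cases x with
      | inl j => simp [hb]
      | inr k => simp [hb, hβ2]
    have hYb : Y ω - A.mulVec b =
        (A.submatrix id Sum.inl).mulVec (-d1) + e ω := by
      rw [hY ω]
      have h1 : A.mulVec β + e ω - A.mulVec b = A.mulVec (β - b) + e ω := by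
        rw [Matrix.mulVec_sub]; abel
      rw [h1, hβb]
      congr 1
      funext x
      simp only [Matrix.mulVec, dotProduct, Fintype.sum_sum_type,
        Sum.elim_inl, Sum.elim_inr, Pi.neg_apply, Matrix.submatrix_apply, id]
      simp
    -- X'e = rn • W
    have hXe : Aᵀ.mulVec (e ω) = rn • W ω := by
      rw [hW ω, smul_smul, mul_inv_cancel₀ hrn.ne', one_smul]
    set c : Fin s ⊕ Fin t → ℝ := Aᵀ.mulVec (Y ω - A.mulVec b) with hcset
    have hcdef : c = Aᵀ.mulVec ((A.submatrix id Sum.inl).mulVec (-d1)) + rn • W ω := by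
      rw [hcset, hYb, Matrix.mulVec_add, hXe]
    -- Gram matrix identities
    have hSmul : ∀ x : Fin s → ℝ, Sg.mulVec (Si.mulVec x) = x := by
      intro x
      rw [hSi, Matrix.mulVec_mulVec, Matrix.mul_nonsing_inv _ (hinv ω), Matrix.one_mulVec]
    have hS11d : Sg.mulVec d1 = rn⁻¹ • w0 := by
      rw [hd1, Matrix.mulVec_smul, hSmul]
    have hS21d : (S21 ω).mulVec d1 = rn⁻¹ • M.mulVec w0 := by
      rw [hd1, Matrix.mulVec_smul, Matrix.mulVec_mulVec, hM]
    have hXX1 : (A.submatrix id Sum.inl)ᵀ * (A.submatrix id Sum.inl) = (n:ℝ) • Sg := by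
      rw [hSg, hS11 ω, smul_smul, mul_inv_cancel₀ hn'.ne', one_smul]
    have hXX2 : (A.submatrix id Sum.inr)ᵀ * (A.submatrix id Sum.inl) = (n:ℝ) • S21 ω := by
      rw [hS21 ω, smul_smul, mul_inv_cancel₀ hn'.ne', one_smul]
    have hlift1 : ∀ j, Aᵀ.mulVec ((A.submatrix id Sum.inl).mulVec (-d1)) (Sum.inl j) =
        (((A.submatrix id Sum.inl)ᵀ * (A.submatrix id Sum.inl)).mulVec (-d1)) j := by
      intro j
      simp only [Matrix.mulVec, dotProduct, Matrix.transpose_apply,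
        Matrix.mul_apply, Matrix.submatrix_apply, id, Finset.sum_mul, Finset.mul_sum]
      rw [Finset.sum_comm]
      exact Finset.sum_congr rfl fun j' _ => Finset.sum_congr rfl fun i _ => by ring
    have hlift2 : ∀ k, Aᵀ.mulVec ((A.submatrix id Sum.inl).mulVec (-d1)) (Sum.inr k) =
        (((A.submatrix id Sum.inr)ᵀ * (A.submatrix id Sum.inl)).mulVec (-d1)) k := by
      intro k
      simp only [Matrix.mulVec, dotProduct, Matrix.transpose_apply,
        Matrix.mul_apply, Matrix.submatrix_apply, id, Finset.sum_mul, Finset.mul_sum]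
      rw [Finset.sum_comm]
      exact Finset.sum_congr rfl fun j' _ => Finset.sum_congr rfl fun i _ => by ring
    -- coordinates of c
    have hcl : ∀ j, c (Sum.inl j) = lam/2 * sgn1 j := by
      intro j
      rw [hcdef]
      simp only [Pi.add_apply, Pi.smul_apply, smul_eq_mul]
      rw [hlift1 j, hXX1, Matrix.smul_mulVec, Matrix.mulVec_neg]
      simp only [Pi.smul_apply, Pi.neg_apply, smul_eq_mul]
      rw [hS11d]
      simp only [Pi.smul_apply, smul_eq_mul, hw0, Pi.sub_apply, Pi.smul_apply]
      rw [← hrn2]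
      have hWj : W ω (Sum.inl j) = W1 j := rfl
      rw [hWj]
      field_simp
      ring
    have hcr : ∀ k, c (Sum.inr k) =
        -(rn * ((M.mulVec W1) k - W2 k)) + lam/2 * (M.mulVec sgn1) k := by
      intro k
      rw [hcdef]
      simp only [Pi.add_apply, Pi.smul_apply, smul_eq_mul]
      rw [hlift2 k, hXX2, Matrix.smul_mulVec, Matrix.mulVec_neg]
      simp only [Pi.smul_apply, Pi.neg_apply, smul_eq_mul]
      rw [hS21d]
      have hMw : M.mulVec w0 = M.mulVec W1 - (lam/(2*rn)) • M.mulVec sgn1 := by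
        rw [hw0, Matrix.mulVec_sub, Matrix.mulVec_smul]
      rw [hMw]
      simp only [Pi.smul_apply, smul_eq_mul, Pi.sub_apply]
      rw [← hrn2]
      have hWk : W ω (Sum.inr k) = W2 k := rfl
      rw [hWk]
      field_simp
      ring
    -- bound on the inactive coordinates
    have hcrb : ∀ k, |c (Sum.inr k)| ≤ lam / 2 := by
      intro k
      rw [hcr k]
      have hDk := hD k
      have hz : ((M.mulVec W1 - W2) k) = (M.mulVec W1) k - W2 k := rfl
      rw [hz] at hDk
      set z := (M.mulVec W1) k - W2 k with hzdef
      set a := (M.mulVec sgn1) k with hadef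
      have h1 : |(-(rn * z)) + lam/2 * a| ≤ rn * |z| + lam/2 * |a| := by
        calc |(-(rn * z)) + lam/2 * a| ≤ |(-(rn * z))| + |lam/2 * a| := abs_add_le _ _
        _ = rn * |z| + lam/2 * |a| := by
            rw [abs_neg, abs_mul, abs_mul, abs_of_nonneg hrn.le,
              abs_of_nonneg (by linarith : (0:ℝ) ≤ lam/2)]
      have h2 : rn * |z| ≤ rn * (lam / (2 * rn) * (1 - |a|)) :=
        mul_le_mul_of_nonneg_left hDk hrn.le
      have h3 : rn * (lam / (2 * rn) * (1 - |a|)) = lam/2 * (1 - |a|) := by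
        field_simp
      calc |(-(rn * z)) + lam/2 * a| ≤ rn * |z| + lam/2 * |a| := h1
      _ ≤ lam/2 * (1 - |a|) + lam/2 * |a| := by rw [← h3] at *; linarith
      _ = lam/2 := by ring
    -- sign behaviour of the active coordinates
    have hbsgn : ∀ j, Real.sign (b (Sum.inl j)) = Real.sign (β (Sum.inl j)) ∧
        sgn1 j * b (Sum.inl j) = |b (Sum.inl j)| := by
      intro j
      have habs := abs_lt.mp (hd1abs j)
      have hbj : b (Sum.inl j) = β (Sum.inl j) + d1 j := rfl
      rcases (hβ1 j).lt_or_gt with hneg | hpos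
      · have h1 : |β (Sum.inl j)| = -β (Sum.inl j) := abs_of_neg hneg
        have h2 : b (Sum.inl j) < 0 := by rw [hbj]; linarith [habs.2, h1 ▸ habs.2]
        constructor
        · rw [Real.sign_of_neg h2, Real.sign_of_neg hneg]
        · rw [hsgn1 j, Real.sign_of_neg hneg, abs_of_neg h2]; ring
      · have h1 : |β (Sum.inl j)| = β (Sum.inl j) := abs_of_pos hpos
        have h2 : 0 < b (Sum.inl j) := by rw [hbj]; linarith [habs.1, h1 ▸ habs.1]
        constructor
        · rw [Real.sign_of_pos h2, Real.sign_of_pos hpos]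
        · rw [hsgn1 j, Real.sign_of_pos hpos, abs_of_pos h2]; ring
    -- assemble KKT conditions
    have hc1 : ∀ x, |c x| ≤ lam / 2 := by
      intro x
      cases x with
      | inl j =>
          rw [hcl j, abs_mul, abs_of_nonneg (by linarith : (0:ℝ) ≤ lam/2), hsgn1 j,
            abs_sign_one (hβ1 j), mul_one]
      | inr k => exact hcrb k
    have hc2 : ∀ x, c x * b x = lam / 2 * |b x| := by
      intro x
      cases x with
      | inl j =>
          rw [hcl j, mul_assoc, (hbsgn j).2]
      | inr k =>
          have : b (Sum.inr k) = 0 := rfl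
          rw [this]
          simp
    refine ⟨b, kkt_sufficient A (Y ω) lam b hc1 hc2, ?_⟩
    intro x
    cases x with
    | inl j => exact (hbsgn j).1
    | inr k =>
        have h1 : b (Sum.inr k) = 0 := rfl
        rw [h1, hβ2 k]
  exact ⟨key, measure_mono fun ω hω => key ω hω⟩


end Paper
end
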